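/- Let R be a pre-λ-ring that is torsion free as an additive group (nr ≠ 0 for all r ≠ 0 and n ≥ 1). Define Adams operations Ψⁿ : R → R by (d/dt) log λ_t(a) = Σ_{n≥0} (-1)ⁿ Ψ^{n+1}(a) tⁿ. If Ψⁿ(1) = 1, Ψⁿ(ab) = Ψⁿ(a)Ψⁿ(b), and Ψⁿ(Ψᵐ(a)) = Ψ^{nm}(a) for all n, m ≥ 1 and a, b ∈ R, then the pre-λ-ring structure on R is a λ-ring structure, i.e. λⁿ(xy) = Pₙ(λ¹(x),…,λⁿ(x); λ¹(y),…,λⁿ(y)) and λᵐ(λⁿ(x)) = P_{m,n}(λ¹(x),…,λ^{mn}(x)) hold for all x, y ∈ R. -/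

import Mathlib

/-- The `k`-th elementary symmetric function of the family `ξ`. -/
def esymmF {R : Type} [CommRing R] {q : ℕ} (k : ℕ) (ξ : Fin q → R) : R :=
  ∑ s ∈ Finset.powersetCard k Finset.univ, ∏ i ∈ s, ξ i

/-- A pre-λ-ring structure on a commutative ring `R`. -/
def IsPreLambda {R : Type} [CommRing R] (l : ℕ → R → R) : Prop :=
  (∀ x : R, l 0 x = 1) ∧ (∀ x : R, l 1 x = x) ∧
  (∀ x y : R, ∀ n : ℕ, l n (x + y) = ∑ j ∈ Finset.range (n + 1), l j x * l (n - j) y)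

/-- The universal polynomials `Pₙ` governing products:
`Pₙ(s;σ)` is the coefficient of `tⁿ` in `∏_{i,j}(1 + ξᵢζⱼt)`. -/
def IsWittMulFamily (P : ∀ n : ℕ, MvPolynomial (Fin n ⊕ Fin n) ℤ) : Prop :=
  ∀ (S : Type) [CommRing S], ∀ (n q r : ℕ), n ≤ q → n ≤ r →
    ∀ (ξ : Fin q → S) (ζ : Fin r → S),
      MvPolynomial.eval₂ (Int.castRingHom S)
          (Sum.elim (fun i : Fin n => esymmF ((i : ℕ) + 1) ξ)
            fun j : Fin n => esymmF ((j : ℕ) + 1) ζ)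
          (P n)
        = (∏ i : Fin q, ∏ j : Fin r,
            (1 + Polynomial.C (ξ i * ζ j) * Polynomial.X)).coeff n

/-- The universal polynomials `P_{n,m}` governing exterior powers:
`P_{n,m}(s)` is the coefficient of `tⁿ` in `∏_{i₁<…<i_m}(1 + ξ_{i₁}⋯ξ_{i_m}t)`. -/
def IsWittExtFamily (Q : ∀ n m : ℕ, MvPolynomial (Fin (n * m)) ℤ) : Prop :=
  ∀ (S : Type) [CommRing S], ∀ (n m q : ℕ), n * m ≤ q → ∀ ξ : Fin q → S,
    MvPolynomial.eval₂ (Int.castRingHom S)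
        (fun i : Fin (n * m) => esymmF ((i : ℕ) + 1) ξ) (Q n m)
      = (∏ s ∈ Finset.powersetCard m (Finset.univ : Finset (Fin q)),
          (1 + Polynomial.C (∏ i ∈ s, ξ i) * Polynomial.X)).coeff n

/-- The Newton recursion characterizing the Adams operations `Ψ` associated to
the λ-operations `l`, equivalent to
`(d/dt) log λ_t(a) = ∑ (-1)ⁿ Ψ^{n+1}(a) tⁿ`. -/
def NewtonRec {R : Type} [CommRing R] (l Ψ : ℕ → R → R) : Prop :=
  ∀ (a : R) (k : ℕ), 1 ≤ k →
    (∑ i ∈ Finset.range k, (-1 : R) ^ i * l i a * Ψ (k - i) a)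
      = (-1 : R) ^ (k + 1) * (k : R) * l k a

/-- The two λ-ring identities (1.23) and (1.34):
`λⁿ(xy) = Pₙ(λ¹x,…,λⁿx; λ¹y,…,λⁿy)` and `λᵐ(λⁿx) = P_{m,n}(λ¹x,…,λ^{mn}x)`. -/
def LambdaIdent {R : Type} [CommRing R] (l : ℕ → R → R)
    (P : ∀ n : ℕ, MvPolynomial (Fin n ⊕ Fin n) ℤ)
    (Q : ∀ n m : ℕ, MvPolynomial (Fin (n * m)) ℤ) : Prop :=
  (∀ x y : R, ∀ n : ℕ,
      l n (x * y) = MvPolynomial.eval₂ (Int.castRingHom R)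
        (Sum.elim (fun i : Fin n => l ((i : ℕ) + 1) x)
          fun j : Fin n => l ((j : ℕ) + 1) y)
        (P n)) ∧
  (∀ x : R, ∀ m n : ℕ,
      l m (l n x) = MvPolynomial.eval₂ (Int.castRingHom R)
        (fun i : Fin (m * n) => l ((i : ℕ) + 1) x) (Q m n))


section AuxNewton

variable {S : Type*} [CommRing S]



/-- The Newton recursion between a sequence `c` and its "Newton dual" `ψ`. -/
def Rec (c ψ : ℕ → S) : Prop :=
  ∀ k : ℕ, 1 ≤ k →
    (∑ i ∈ Finset.range k, (-1 : S) ^ i * c i * ψ (k - i))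
      = (-1 : S) ^ (k + 1) * (k : S) * c k

/-- The Newton dual of a sequence, defined by solving the Newton recursion. -/
def nd (c : ℕ → S) : ℕ → S
  | k => (-1 : S) ^ (k + 1) * (k : S) * c k
      - ∑ i ∈ (Finset.Ico 1 k).attach, (-1 : S) ^ (i : ℕ) * c i * nd c (k - i)
  decreasing_by
    have := i.2
    simp only [Finset.mem_Ico] at this
    omega

lemma sum_range_split (f : ℕ → S) {k : ℕ} (hk : 1 ≤ k) :
    ∑ i ∈ Finset.range k, f i = f 0 + ∑ i ∈ (Finset.Ico 1 k).attach, f i := by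
  rw [Finset.sum_attach, Finset.range_eq_Ico, ← Finset.sum_eq_sum_Ico_succ_bot hk]

lemma nd_rec (c : ℕ → S) (h0 : c 0 = 1) : Rec c (nd c) := by
  intro k hk
  rw [sum_range_split _ hk, nd]
  simp [h0]

lemma rec_nd_unique {c ψ : ℕ → S} (h : Rec c ψ) (h0 : c 0 = 1) :
    ∀ k, 1 ≤ k → ψ k = nd c k := by
  intro k
  induction k using Nat.strong_induction_on with
  | _ k ih =>
    intro hk
    have hrec := h k hk
    rw [sum_range_split _ hk] at hrec
    have : ∀ i ∈ (Finset.Ico 1 k).attach,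
        (-1 : S) ^ (i : ℕ) * c i * ψ (k - i) = (-1 : S) ^ (i : ℕ) * c i * nd c (k - i) := by
      intro i _
      have hi := i.2
      simp only [Finset.mem_Ico] at hi
      rw [ih (k - i) (by omega) (by omega)]
    rw [Finset.sum_congr rfl this] at hrec
    rw [nd]
    simp only [h0, pow_zero, one_mul, Nat.sub_zero] at hrec ⊢
    linear_combination hrec

lemma nd_congr {c c' : ℕ → S} (k : ℕ) (h : ∀ i, 1 ≤ i → i ≤ k → c i = c' i) :
    nd c k = nd c' k := by
  induction k using Nat.strong_induction_on with
  | _ k ih =>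
    rw [nd, nd]
    rcases Nat.eq_zero_or_pos k with rfl | hk
    · rw [Finset.Ico_eq_empty (by omega)]; simp
    · rw [h k hk le_rfl]
      congr 1
      refine Finset.sum_congr rfl fun i _ => ?_
      have hi := i.2
      simp only [Finset.mem_Ico] at hi
      rw [h i hi.1 (by omega), ih (k - i) (by omega) (fun j hj1 hj2 => h j hj1 (by omega))]

lemma nd_map {S' : Type*} [CommRing S'] {F : Type*} [FunLike F S S'] [RingHomClass F S S']
    (f : F) (c : ℕ → S) (k : ℕ) :
    f (nd c k) = nd (fun n => f (c n)) k := by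
  induction k using Nat.strong_induction_on with
  | _ k ih =>
    rw [nd, nd]
    simp only [map_sub, map_mul, map_sum, map_pow, map_neg, map_one, map_natCast]
    congr 1
    refine Finset.sum_congr rfl fun i _ => ?_
    have hi := i.2
    simp only [Finset.mem_Ico] at hi
    rw [ih (k - i) (by omega)]

lemma rec_congr {c c' ψ ψ' : ℕ → S} (h : Rec c ψ) (hc : ∀ n, c n = c' n)
    (hψ : ∀ k, 1 ≤ k → ψ k = ψ' k) : Rec c' ψ' := by
  intro k hk
  rw [← hc k, ← h k hk]
  refine Finset.sum_congr rfl fun i hi => ?_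
  simp only [Finset.mem_range] at hi
  rw [hc i, hψ (k - i) (by omega)]

lemma rec_unique {c c' ψ : ℕ → S}
    (htf : ∀ (n : ℕ) (r : S), 0 < n → n • r = 0 → r = 0)
    (h0 : c 0 = c' 0) (h : Rec c ψ) (h' : Rec c' ψ) : ∀ n, c n = c' n := by
  intro n
  induction n using Nat.strong_induction_on with
  | _ n ih =>
    rcases Nat.eq_zero_or_pos n with rfl | hn
    · exact h0
    · have e1 := h n hn
      have e2 := h' n hn
      have : ∀ i ∈ Finset.range n, (-1 : S) ^ i * c i * ψ (n - i)
          = (-1 : S) ^ i * c' i * ψ (n - i) := by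
        intro i hi
        simp only [Finset.mem_range] at hi
        rw [ih i hi]
      rw [Finset.sum_congr rfl this, e2] at e1
      have hsq : ((-1 : S) ^ (n + 1)) * ((-1 : S) ^ (n + 1)) = 1 := by
        rw [← pow_add, ← two_mul, pow_mul]; simp
      have : (n : S) * (c n - c' n) = 0 := by
        have := congrArg (fun z => (-1 : S) ^ (n + 1) * z) e1
        simp only [← mul_assoc, hsq, one_mul] at this
        linear_combination -this
      refine sub_eq_zero.mp (htf n _ hn ?_)
      rw [nsmul_eq_mul]; exact this



/-- Mirror power series `∑ (-1)^n c n X^n`. -/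
noncomputable def mir (c : ℕ → S) : PowerSeries S :=
  PowerSeries.mk fun n => (-1 : S) ^ n * c n

/-- `∑_{n ≥ 1} ψ n X^n`. -/
noncomputable def zsh (ψ : ℕ → S) : PowerSeries S :=
  PowerSeries.mk fun n => if n = 0 then 0 else ψ n

lemma rec_iff_ps (c ψ : ℕ → S) :
    Rec c ψ ↔ mir c * zsh ψ = -(PowerSeries.X * PowerSeries.derivativeFun (mir c)) := by
  constructor
  · intro h
    ext k
    rcases Nat.eq_zero_or_pos k with rfl | hk
    · simp [mir, zsh, PowerSeries.coeff_zero_eq_constantCoeff]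
    · rw [PowerSeries.coeff_mul, Finset.Nat.sum_antidiagonal_eq_sum_range_succ_mk,
        Finset.sum_range_succ]
      simp only [mir, zsh, PowerSeries.coeff_mk]
      rw [if_pos (Nat.sub_self k)]
      have hs : ∀ i ∈ Finset.range k,
          (-1 : S) ^ i * c i * (if k - i = 0 then 0 else ψ (k - i))
            = (-1 : S) ^ i * c i * ψ (k - i) := by
        intro i hi
        simp only [Finset.mem_range] at hi
        rw [if_neg (by omega)]
      rw [mul_zero, add_zero, Finset.sum_congr rfl hs, h k hk]
      obtain ⟨k, rfl⟩ := Nat.exists_eq_add_of_le hk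
      rw [map_neg]
      rw [show (1 : ℕ) + k = k + 1 from by omega]
      rw [PowerSeries.coeff_succ_X_mul, show ∀ f : PowerSeries S, f.derivativeFun = PowerSeries.derivative S f from fun _ => rfl, PowerSeries.coeff_derivative]
      simp only [PowerSeries.coeff_mk]
      push_cast
      ring
  · intro h k hk
    have := congrArg (fun f => PowerSeries.coeff k f) h
    rw [PowerSeries.coeff_mul, Finset.Nat.sum_antidiagonal_eq_sum_range_succ_mk,
      Finset.sum_range_succ] at this
    simp only [mir, zsh, PowerSeries.coeff_mk] at this
    rw [if_pos (Nat.sub_self k), mul_zero, add_zero] at this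
    have hs : ∀ i ∈ Finset.range k,
        (-1 : S) ^ i * c i * (if k - i = 0 then 0 else ψ (k - i))
          = (-1 : S) ^ i * c i * ψ (k - i) := by
      intro i hi
      simp only [Finset.mem_range] at hi
      rw [if_neg (by omega)]
    rw [Finset.sum_congr rfl hs] at this
    rw [this]
    obtain ⟨k, rfl⟩ := Nat.exists_eq_add_of_le hk
    rw [map_neg, show (1 : ℕ) + k = k + 1 from by omega,
      PowerSeries.coeff_succ_X_mul, show ∀ f : PowerSeries S, f.derivativeFun = PowerSeries.derivative S f from fun _ => rfl, PowerSeries.coeff_derivative]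
    simp only [PowerSeries.coeff_mk]
    push_cast
    ring

lemma mir_conv (a b : ℕ → S) :
    mir (fun n => ∑ j ∈ Finset.range (n + 1), a j * b (n - j)) = mir a * mir b := by
  ext k
  rw [PowerSeries.coeff_mul, Finset.Nat.sum_antidiagonal_eq_sum_range_succ_mk]
  simp only [mir, PowerSeries.coeff_mk]
  rw [Finset.mul_sum]
  refine Finset.sum_congr rfl fun i hi => ?_
  simp only [Finset.mem_range] at hi
  have : (-1 : S) ^ i * ((-1 : S) ^ (k - i)) = (-1 : S) ^ k := by
    rw [← pow_add]; congr 1; omega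
  linear_combination -(a i * b (k - i)) * this

lemma zsh_add (α β : ℕ → S) : zsh (fun k => α k + β k) = zsh α + zsh β := by
  ext k
  simp only [zsh, PowerSeries.coeff_mk, map_add]
  split_ifs <;> simp

lemma rec_conv {a b α β : ℕ → S} (ha : Rec a α) (hb : Rec b β) :
    Rec (fun n => ∑ j ∈ Finset.range (n + 1), a j * b (n - j))
      (fun k => α k + β k) := by
  rw [rec_iff_ps] at ha hb ⊢
  rw [mir_conv, zsh_add]
  have hd := PowerSeries.derivativeFun_mul (mir a) (mir b)
  rw [mul_add]
  calc mir a * mir b * zsh α + mir a * mir b * zsh β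
      = mir b * (mir a * zsh α) + mir a * (mir b * zsh β) := by ring
    _ = mir b * (-(PowerSeries.X * PowerSeries.derivativeFun (mir a)))
        + mir a * (-(PowerSeries.X * PowerSeries.derivativeFun (mir b))) := by rw [ha, hb]
    _ = -(PowerSeries.X * PowerSeries.derivativeFun (mir a * mir b)) := by
        rw [hd, smul_eq_mul, smul_eq_mul]; ring
section PolyPart
open Polynomial

lemma coeff_one_add_C_mul_X (r : S) (k : ℕ) :
    ((1 : S[X]) + C r * X).coeff k =
      if k = 0 then 1 else if k = 1 then r else 0 := by
  rcases k with _ | _ | k <;>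
    simp [Polynomial.coeff_one, Polynomial.coeff_C_mul, Polynomial.coeff_X]

lemma coeff_prod_one_add {ι : Type*} [DecidableEq ι] (A : Finset ι) (x : ι → S) :
    ∀ k : ℕ, (∏ i ∈ A, ((1 : S[X]) + C (x i) * X)).coeff k
      = ∑ s ∈ A.powersetCard k, ∏ i ∈ s, x i := by
  induction A using Finset.induction_on with
  | empty =>
    intro k
    rcases Nat.eq_zero_or_pos k with rfl | hk
    · simp
    · rw [Finset.powersetCard_eq_empty.2 (by simp; omega)]
      simp [Polynomial.coeff_one, Nat.pos_iff_ne_zero.mp hk]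
  | @insert a A ha ih =>
    intro k
    rw [Finset.prod_insert ha]
    rcases Nat.eq_zero_or_pos k with rfl | hk
    · rw [Polynomial.mul_coeff_zero, Finset.powersetCard_zero]
      simp [ih 0, Polynomial.coeff_one]
    · obtain ⟨k, rfl⟩ := Nat.exists_eq_add_of_le hk
      rw [show (1 : ℕ) + k = k + 1 from by omega]
      have hco : (((1 : S[X]) + C (x a) * X) * ∏ i ∈ A, ((1 : S[X]) + C (x i) * X)).coeff (k+1)
          = (∏ i ∈ A, ((1 : S[X]) + C (x i) * X)).coeff (k+1)
            + x a * (∏ i ∈ A, ((1 : S[X]) + C (x i) * X)).coeff k := by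
        rw [add_mul, one_mul, Polynomial.coeff_add, mul_assoc, Polynomial.coeff_C_mul,
          Polynomial.coeff_X_mul]
      rw [hco, ih, ih, Finset.powersetCard_succ_insert ha, Finset.sum_union, Finset.sum_image]
      · congr 1
        rw [Finset.mul_sum]
        refine Finset.sum_congr rfl fun s hs => ?_
        rw [Finset.mem_powersetCard] at hs
        rw [Finset.prod_insert (fun hmem => ha (hs.1 hmem))]
      · intro s hs t ht hst
        rw [Finset.mem_coe, Finset.mem_powersetCard] at hs
        rw [Finset.mem_coe, Finset.mem_powersetCard] at ht
        have hsa : a ∉ s := fun hmem => ha (hs.1 hmem)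
        have hta : a ∉ t := fun hmem => ha (ht.1 hmem)
        rw [← Finset.erase_insert hsa, ← Finset.erase_insert hta, hst]
      · rw [Finset.disjoint_left]
        intro s hs hs'
        rw [Finset.mem_powersetCard] at hs
        simp only [Finset.mem_image] at hs'
        obtain ⟨t, ht, rfl⟩ := hs'
        exact ha (hs.1 (Finset.mem_insert_self a t))

lemma rec_single (r : S) :
    Rec (fun n => ((1 : S[X]) + C r * X).coeff n) (fun k => r ^ k) := by
  intro k hk
  simp only [coeff_one_add_C_mul_X]
  rcases eq_or_lt_of_le hk with rfl | hk2
  · simp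
  · have h2 : 2 ≤ k := hk2
    rw [if_neg (by omega), if_neg (by omega)]
    rw [← Finset.sum_subset (Finset.range_subset_range.2 h2) (fun i hi hni => by
      simp only [Finset.mem_range, not_lt] at hni
      rw [if_neg (by omega), if_neg (by omega)]
      ring)]
    rw [Finset.sum_range_succ, Finset.sum_range_one]
    have : r * r ^ (k - 1) = r ^ k := by
      rw [← pow_succ']; congr 1; omega
    norm_num
    linear_combination -this

lemma rec_esymm {ι : Type*} [DecidableEq ι] (A : Finset ι) (x : ι → S) :
    Rec (fun n => (∏ i ∈ A, ((1 : S[X]) + C (x i) * X)).coeff n)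
      (fun k => ∑ i ∈ A, x i ^ k) := by
  induction A using Finset.induction_on with
  | empty =>
    intro k hk
    simp [Polynomial.coeff_one, Nat.pos_iff_ne_zero.mp hk]
  | @insert a A ha ih =>
    refine rec_congr (rec_conv (rec_single (x a)) ih) (fun n => ?_) (fun j hj => ?_)
    · rw [Finset.prod_insert ha, Polynomial.coeff_mul,
        Finset.Nat.sum_antidiagonal_eq_sum_range_succ_mk]
    · rw [Finset.sum_insert ha]

lemma coeff_zero_prod_one_add {ι : Type*} [DecidableEq ι] (A : Finset ι) (x : ι → S) :
    (∏ i ∈ A, ((1 : S[X]) + C (x i) * X)).coeff 0 = 1 := by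
  rw [coeff_prod_one_add, Finset.powersetCard_zero, Finset.sum_singleton, Finset.prod_empty]

lemma nd_coeff_prod {ι : Type*} [DecidableEq ι] (A : Finset ι) (x : ι → S) {m : ℕ}
    (hm : 1 ≤ m) :
    nd (fun n => (∏ i ∈ A, ((1 : S[X]) + C (x i) * X)).coeff n) m = ∑ i ∈ A, x i ^ m :=
  (rec_nd_unique (rec_esymm A x) (coeff_zero_prod_one_add A x) m hm).symm

end PolyPart
section Subst
open MvPolynomial

/-- The elementary symmetric substitution map in one block of variables. -/
noncomputable def epsK (K : ℕ) (A : Type*) [CommRing A] :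
    MvPolynomial (Fin K) A →ₐ[A] MvPolynomial (Fin K) A :=
  aeval (fun i : Fin K => esymm (Fin K) A ((i : ℕ) + 1))

lemma epsK_injective (K : ℕ) (A : Type*) [CommRing A] :
    Function.Injective (epsK K A) := by
  intro p q hpq
  refine esymmAlgHom_injective A (σ := Fin K) (n := K) (by simp) ?_
  refine Subtype.ext ?_
  rw [esymmAlgHom_apply, esymmAlgHom_apply]
  exact hpq

/-- The elementary symmetric substitution map in two blocks of variables. -/
noncomputable def epsS (K : ℕ) :
    MvPolynomial (Fin K ⊕ Fin K) ℤ →ₐ[ℤ] MvPolynomial (Fin K ⊕ Fin K) ℤ :=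
  aeval (Sum.elim
    (fun i : Fin K => ∑ s ∈ Finset.powersetCard ((i : ℕ) + 1) Finset.univ,
      ∏ j ∈ s, X (Sum.inl j))
    (fun i : Fin K => ∑ s ∈ Finset.powersetCard ((i : ℕ) + 1) Finset.univ,
      ∏ j ∈ s, X (Sum.inr j)))

lemma epsS_injective (K : ℕ) : Function.Injective (epsS K) := by
  set A' := MvPolynomial (Fin K) ℤ
  set E := sumAlgEquiv ℤ (Fin K) (Fin K)
  set F : MvPolynomial (Fin K) A' →+* MvPolynomial (Fin K) A' :=
    (epsK K A').toRingHom.comp (MvPolynomial.map (epsK K ℤ).toRingHom)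
  have hF : Function.Injective F := by
    refine (epsK_injective K A').comp (MvPolynomial.map_injective _ (epsK_injective K ℤ))
  have key : (E : MvPolynomial (Fin K ⊕ Fin K) ℤ →+* MvPolynomial (Fin K) A').comp
      (epsS K).toRingHom = F.comp (E : _ →+* _) := by
    apply MvPolynomial.ringHom_ext
    · intro r
      simp only [RingHom.comp_apply, RingHom.coe_coe, AlgHom.toRingHom_eq_coe]
      rw [show (C r : MvPolynomial (Fin K ⊕ Fin K) ℤ) = ((r : ℤ) : MvPolynomial _ ℤ) from by
        simp]
      simp only [map_intCast]
    · rintro (i | i) <;>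
        simp only [RingHom.comp_apply, RingHom.coe_coe, AlgHom.toRingHom_eq_coe, epsS, aeval_X,
          Sum.elim_inl, Sum.elim_inr, map_sum, map_prod]
      · have h1 : E (X (Sum.inl i) : MvPolynomial (Fin K ⊕ Fin K) ℤ) = X i := by
          exact sumAlgEquiv_X_inl ..
        have h2 : ∀ j : Fin K, E (X (Sum.inl j) : MvPolynomial (Fin K ⊕ Fin K) ℤ) = X j := by
          intro j
          exact sumAlgEquiv_X_inl ..
        rw [h1]
        simp only [h2]
        rw [show F (X i) = esymm (Fin K) A' ((i : ℕ) + 1) from by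
          simp [F, epsK, MvPolynomial.map_X, aeval_X, bind₁_X_right]]
        rfl
      · have h1 : E (X (Sum.inr i) : MvPolynomial (Fin K ⊕ Fin K) ℤ) = C (X i) := by
          exact sumAlgEquiv_X_inr ..
        have h2 : ∀ j : Fin K, E (X (Sum.inr j) : MvPolynomial (Fin K ⊕ Fin K) ℤ) = C (X j) := by
          intro j
          exact sumAlgEquiv_X_inr ..
        rw [h1]
        simp only [h2]
        have hX : epsK K ℤ (X i) = esymm (Fin K) ℤ ((i : ℕ) + 1) := by
          show aeval _ (X i) = _
          rw [aeval_X]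
        have hmap : MvPolynomial.map (epsK K ℤ).toRingHom
            ((C (X i) : MvPolynomial (Fin K) A')) = C (esymm (Fin K) ℤ ((i : ℕ) + 1)) := by
          rw [MvPolynomial.map_C, AlgHom.toRingHom_eq_coe, RingHom.coe_coe, hX]
        have hF2 : F (C (X i)) = C (esymm (Fin K) ℤ ((i : ℕ) + 1)) := by
          rw [RingHom.comp_apply, hmap]
          show epsK K A' (C (esymm (Fin K) ℤ ((i : ℕ) + 1))) = _
          rw [show (C (esymm (Fin K) ℤ ((i : ℕ) + 1)) : MvPolynomial (Fin K) A')
              = algebraMap A' (MvPolynomial (Fin K) A') (esymm (Fin K) ℤ ((i : ℕ) + 1)) from rfl]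
          rw [AlgHom.commutes]
        rw [hF2, esymm, map_sum]
        simp only [map_prod]
  intro p q hpq
  have h2 : ∀ z, E (epsS K z) = F (E z) := fun z => RingHom.congr_fun key z
  have : F (E p) = F (E q) := by rw [← h2, ← h2, hpq]
  exact E.injective (hF this)

end Subst

end AuxNewton

section AuxUniversal
variable {S : Type*} [CommRing S]
section Universal
open MvPolynomial

/-- A sequence of "generic variables": `seqV g j = g (j-1)` for `1 ≤ j ≤ K`. -/
noncomputable def seqV {K : ℕ} {A : Type*} [CommRing A] (g : Fin K → A) : ℕ → A :=
  fun j => if h : 1 ≤ j ∧ j - 1 < K then g ⟨j - 1, h.2⟩ else if j = 0 then 1 else 0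

lemma esymmF_eq_coeff {S : Type} [CommRing S] {q : ℕ} (x : Fin q → S) (k : ℕ) :
    esymmF k x = (∏ i : Fin q, ((1 : Polynomial S) + Polynomial.C (x i) * Polynomial.X)).coeff k := by
  rw [coeff_prod_one_add]; rfl

lemma UL1 {P : ∀ n : ℕ, MvPolynomial (Fin n ⊕ Fin n) ℤ} (hP : IsWittMulFamily P)
    (K : ℕ) (hK : 1 ≤ K) :
    (∑ i ∈ Finset.range K,
        (-1 : MvPolynomial (Fin K ⊕ Fin K) ℤ) ^ i
          * MvPolynomial.eval₂ (Int.castRingHom (MvPolynomial (Fin K ⊕ Fin K) ℤ))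
              (Sum.elim
                (fun v : Fin i => seqV (fun j : Fin K => MvPolynomial.X (Sum.inl j)) ((v : ℕ)+1))
                (fun v : Fin i => seqV (fun j : Fin K => MvPolynomial.X (Sum.inr j)) ((v : ℕ)+1)))
              (P i)
          * (nd (seqV (fun j : Fin K => MvPolynomial.X (Sum.inl j))) (K - i)
             * nd (seqV (fun j : Fin K => MvPolynomial.X (Sum.inr j))) (K - i)))
      = (-1) ^ (K + 1) * (K : MvPolynomial (Fin K ⊕ Fin K) ℤ)
          * MvPolynomial.eval₂ (Int.castRingHom (MvPolynomial (Fin K ⊕ Fin K) ℤ))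
              (Sum.elim
                (fun v : Fin K => seqV (fun j : Fin K => MvPolynomial.X (Sum.inl j)) ((v : ℕ)+1))
                (fun v : Fin K => seqV (fun j : Fin K => MvPolynomial.X (Sum.inr j)) ((v : ℕ)+1)))
              (P K) := by
  apply epsS_injective K
  set ξ : Fin K → MvPolynomial (Fin K ⊕ Fin K) ℤ := fun j => MvPolynomial.X (Sum.inl j) with hξ
  set ζ : Fin K → MvPolynomial (Fin K ⊕ Fin K) ℤ := fun j => MvPolynomial.X (Sum.inr j) with hζ
  have hεXl : ∀ j : Fin K, epsS K (MvPolynomial.X (Sum.inl j)) = esymmF ((j : ℕ) + 1) ξ := by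
    intro j
    show MvPolynomial.aeval _ _ = _
    rw [MvPolynomial.aeval_X]
    rfl
  have hεXr : ∀ j : Fin K, epsS K (MvPolynomial.X (Sum.inr j)) = esymmF ((j : ℕ) + 1) ζ := by
    intro j
    show MvPolynomial.aeval _ _ = _
    rw [MvPolynomial.aeval_X]
    rfl
  have hcsv : ∀ jj : ℕ, 1 ≤ jj → jj ≤ K →
      epsS K (seqV ξ jj) = esymmF jj ξ := by
    intro jj h1 h2
    rw [seqV, dif_pos ⟨h1, by omega⟩]
    show MvPolynomial.aeval _ (MvPolynomial.X (Sum.inl (⟨jj - 1, by omega⟩ : Fin K))) = _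
    rw [MvPolynomial.aeval_X]
    show esymmF ((jj - 1) + 1) ξ = esymmF jj ξ
    congr 1
    omega
  have hcσv : ∀ jj : ℕ, 1 ≤ jj → jj ≤ K →
      epsS K (seqV ζ jj) = esymmF jj ζ := by
    intro jj h1 h2
    rw [seqV, dif_pos ⟨h1, by omega⟩]
    show MvPolynomial.aeval _ (MvPolynomial.X (Sum.inr (⟨jj - 1, by omega⟩ : Fin K))) = _
    rw [MvPolynomial.aeval_X]
    show esymmF ((jj - 1) + 1) ζ = esymmF jj ζ
    congr 1
    omega
  have hεnds : ∀ t, 1 ≤ t → t ≤ K →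
      epsS K (nd (seqV ξ) t) = ∑ j : Fin K, ξ j ^ t := by
    intro t h1 h2
    rw [nd_map (epsS K) (seqV ξ) t,
      nd_congr (c' := fun n => (∏ i : Fin K,
          ((1 : Polynomial (MvPolynomial (Fin K ⊕ Fin K) ℤ)) + Polynomial.C (ξ i) * Polynomial.X)).coeff n)
        t (fun i hi1 hi2 => by rw [hcsv i hi1 (le_trans hi2 h2), esymmF_eq_coeff])]
    exact nd_coeff_prod Finset.univ ξ h1
  have hεndσ : ∀ t, 1 ≤ t → t ≤ K →
      epsS K (nd (seqV ζ) t) = ∑ j : Fin K, ζ j ^ t := by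
    intro t h1 h2
    rw [nd_map (epsS K) (seqV ζ) t,
      nd_congr (c' := fun n => (∏ i : Fin K,
          ((1 : Polynomial (MvPolynomial (Fin K ⊕ Fin K) ℤ)) + Polynomial.C (ζ i) * Polynomial.X)).coeff n)
        t (fun i hi1 hi2 => by rw [hcσv i hi1 (le_trans hi2 h2), esymmF_eq_coeff])]
    exact nd_coeff_prod Finset.univ ζ h1
  have hεD : ∀ nn : ℕ, nn ≤ K →
      epsS K (MvPolynomial.eval₂ (Int.castRingHom (MvPolynomial (Fin K ⊕ Fin K) ℤ))
        (Sum.elim (fun v : Fin nn => seqV ξ ((v : ℕ)+1)) (fun v : Fin nn => seqV ζ ((v : ℕ)+1)))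
        (P nn))
      = (∏ i : Fin K, ∏ j : Fin K,
          ((1 : Polynomial (MvPolynomial (Fin K ⊕ Fin K) ℤ))
            + Polynomial.C (ξ i * ζ j) * Polynomial.X)).coeff nn := by
    intro nn hnn
    have h := MvPolynomial.eval₂_comp_left
      ((epsS K : MvPolynomial (Fin K ⊕ Fin K) ℤ →+* MvPolynomial (Fin K ⊕ Fin K) ℤ))
      (Int.castRingHom (MvPolynomial (Fin K ⊕ Fin K) ℤ))
      (Sum.elim (fun v : Fin nn => seqV ξ ((v : ℕ)+1)) (fun v : Fin nn => seqV ζ ((v : ℕ)+1)))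
      (P nn)
    rw [Subsingleton.elim
        ((epsS K : MvPolynomial (Fin K ⊕ Fin K) ℤ →+* MvPolynomial (Fin K ⊕ Fin K) ℤ).comp
          (Int.castRingHom (MvPolynomial (Fin K ⊕ Fin K) ℤ)))
        (Int.castRingHom (MvPolynomial (Fin K ⊕ Fin K) ℤ))] at h
    rw [show (((epsS K : MvPolynomial (Fin K ⊕ Fin K) ℤ →+* MvPolynomial (Fin K ⊕ Fin K) ℤ)) ∘
          (Sum.elim (fun v : Fin nn => seqV ξ ((v : ℕ)+1)) (fun v : Fin nn => seqV ζ ((v : ℕ)+1))))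
        = Sum.elim (fun v : Fin nn => esymmF ((v : ℕ)+1) ξ)
            (fun v : Fin nn => esymmF ((v : ℕ)+1) ζ) from by
      funext v
      rcases v with v | v
      · simp only [Function.comp_apply, Sum.elim_inl, RingHom.coe_coe]
        exact hcsv ((v : ℕ)+1) (by omega) (by have := v.2; omega)
      · simp only [Function.comp_apply, Sum.elim_inr, RingHom.coe_coe]
        exact hcσv ((v : ℕ)+1) (by omega) (by have := v.2; omega)] at h
    exact h.trans (hP _ nn K K hnn hnn ξ ζ)
  have main := rec_esymm (Finset.univ : Finset (Fin K × Fin K)) (fun p => ξ p.1 * ζ p.2) K hK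
  have hprod : (∏ p ∈ (Finset.univ : Finset (Fin K × Fin K)),
      ((1 : Polynomial (MvPolynomial (Fin K ⊕ Fin K) ℤ))
        + Polynomial.C (ξ p.1 * ζ p.2) * Polynomial.X))
      = ∏ i : Fin K, ∏ j : Fin K,
        ((1 : Polynomial (MvPolynomial (Fin K ⊕ Fin K) ℤ))
          + Polynomial.C (ξ i * ζ j) * Polynomial.X) := by
    rw [Fintype.prod_prod_type]
  have hpow : ∀ t : ℕ, (∑ p : Fin K × Fin K, (ξ p.1 * ζ p.2) ^ t)
      = (∑ i : Fin K, ξ i ^ t) * (∑ j : Fin K, ζ j ^ t) := by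
    intro t
    rw [Finset.sum_mul_sum, Fintype.sum_prod_type]
    exact Finset.sum_congr rfl fun i _ => Finset.sum_congr rfl fun j _ => mul_pow _ _ _
  simp only [] at main
  rw [map_sum]
  refine Eq.trans (Finset.sum_congr rfl fun i hi => ?_) (main.trans ?_)
  · simp only [Finset.mem_range] at hi
    rw [map_mul, map_mul, map_mul, map_pow, map_neg, map_one,
      hεD i (by omega), hεnds (K - i) (by omega) (by omega),
      hεndσ (K - i) (by omega) (by omega)]
    rw [← hprod, ← hpow (K - i)]
  · rw [map_mul, map_mul, map_pow, map_neg, map_one, map_natCast,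
      hεD K le_rfl, ← hprod]

end Universal
section Universal2
open MvPolynomial

lemma UL2 {Q : ∀ n m : ℕ, MvPolynomial (Fin (n * m)) ℤ} (hQ : IsWittExtFamily Q)
    (m n : ℕ) (hm : 1 ≤ m) (hn : 1 ≤ n) :
    (∑ i ∈ Finset.range n,
        (-1 : MvPolynomial (Fin (m * n)) ℤ) ^ i
          * nd (fun m' => MvPolynomial.eval₂ (Int.castRingHom (MvPolynomial (Fin (m * n)) ℤ))
              (fun v : Fin (m' * i) =>
                seqV (fun j : Fin (m * n) => MvPolynomial.X j) ((v : ℕ) + 1)) (Q m' i)) m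
          * nd (seqV (fun j : Fin (m * n) => MvPolynomial.X j)) (m * (n - i)))
      = (-1) ^ (n + 1) * (n : MvPolynomial (Fin (m * n)) ℤ)
          * nd (fun m' => MvPolynomial.eval₂ (Int.castRingHom (MvPolynomial (Fin (m * n)) ℤ))
              (fun v : Fin (m' * n) =>
                seqV (fun j : Fin (m * n) => MvPolynomial.X j) ((v : ℕ) + 1)) (Q m' n)) m := by
  apply epsK_injective (m * n) ℤ
  set Xf : Fin (m * n) → MvPolynomial (Fin (m * n)) ℤ := fun j => MvPolynomial.X j with hXf
  have hcsv : ∀ jj : ℕ, 1 ≤ jj → jj ≤ m * n →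
      epsK (m * n) ℤ (seqV Xf jj) = esymmF jj Xf := by
    intro jj h1 h2
    rw [seqV, dif_pos ⟨h1, by omega⟩]
    show MvPolynomial.aeval _ (MvPolynomial.X (⟨jj - 1, by omega⟩ : Fin (m * n))) = _
    rw [MvPolynomial.aeval_X]
    show esymmF ((jj - 1) + 1) Xf = esymmF jj Xf
    congr 1
    omega
  have hεnd : ∀ t, 1 ≤ t → t ≤ m * n →
      epsK (m * n) ℤ (nd (seqV Xf) t) = ∑ j : Fin (m * n), Xf j ^ t := by
    intro t h1 h2
    rw [nd_map (epsK (m * n) ℤ) (seqV Xf) t,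
      nd_congr (c' := fun nn => (∏ i : Fin (m * n),
          ((1 : Polynomial (MvPolynomial (Fin (m * n)) ℤ)) + Polynomial.C (Xf i) * Polynomial.X)).coeff nn)
        t (fun i hi1 hi2 => by rw [hcsv i hi1 (le_trans hi2 h2), esymmF_eq_coeff])]
    exact nd_coeff_prod Finset.univ Xf h1
  have hεB : ∀ i : ℕ, i ≤ n →
      epsK (m * n) ℤ (nd (fun m' => MvPolynomial.eval₂
          (Int.castRingHom (MvPolynomial (Fin (m * n)) ℤ))
          (fun v : Fin (m' * i) => seqV Xf ((v : ℕ) + 1)) (Q m' i)) m)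
        = (∏ j : Fin (m * n),
            ((1 : Polynomial (MvPolynomial (Fin (m * n)) ℤ))
              + Polynomial.C (Xf j ^ m) * Polynomial.X)).coeff i := by
    intro i hi
    rw [nd_map (epsK (m * n) ℤ)]
    rw [nd_congr (c' := fun m' => (∏ s ∈ Finset.powersetCard i
          (Finset.univ : Finset (Fin (m * n))),
          ((1 : Polynomial (MvPolynomial (Fin (m * n)) ℤ))
            + Polynomial.C (∏ j ∈ s, Xf j) * Polynomial.X)).coeff m')
        m (fun m' h1 h2 => ?_)]
    · rw [nd_coeff_prod (Finset.powersetCard i (Finset.univ : Finset (Fin (m * n))))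
        (fun s => ∏ j ∈ s, Xf j) hm]
      rw [coeff_prod_one_add]
      exact Finset.sum_congr rfl fun s hs => (Finset.prod_pow s m Xf).symm
    · have h := MvPolynomial.eval₂_comp_left
        ((epsK (m * n) ℤ : MvPolynomial (Fin (m * n)) ℤ →+* MvPolynomial (Fin (m * n)) ℤ))
        (Int.castRingHom (MvPolynomial (Fin (m * n)) ℤ))
        (fun v : Fin (m' * i) => seqV Xf ((v : ℕ) + 1)) (Q m' i)
      rw [Subsingleton.elim
          ((epsK (m * n) ℤ : MvPolynomial (Fin (m * n)) ℤ →+* MvPolynomial (Fin (m * n)) ℤ).comp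
            (Int.castRingHom (MvPolynomial (Fin (m * n)) ℤ)))
          (Int.castRingHom (MvPolynomial (Fin (m * n)) ℤ))] at h
      rw [show (((epsK (m * n) ℤ : MvPolynomial (Fin (m * n)) ℤ →+* MvPolynomial (Fin (m * n)) ℤ)) ∘
            (fun v : Fin (m' * i) => seqV Xf ((v : ℕ) + 1)))
          = fun v : Fin (m' * i) => esymmF ((v : ℕ) + 1) Xf from by
        funext v
        simp only [Function.comp_apply, RingHom.coe_coe]
        exact hcsv ((v : ℕ) + 1) (by omega)
          (by have := v.2; have : (v : ℕ) < m' * i := this; nlinarith [Nat.mul_le_mul h2 hi])] at h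
      exact h.trans (hQ _ m' i (m * n) (Nat.mul_le_mul h2 hi) Xf)
  have main := rec_esymm (Finset.univ : Finset (Fin (m * n))) (fun j => Xf j ^ m) n hn
  simp only [] at main
  rw [map_sum]
  refine Eq.trans (Finset.sum_congr rfl fun i hi => ?_) (main.trans ?_)
  · simp only [Finset.mem_range] at hi
    rw [map_mul, map_mul, map_pow, map_neg, map_one,
      hεB i (by omega), hεnd (m * (n - i)) (Nat.mul_pos (by omega) (by omega)) (Nat.mul_le_mul le_rfl (by omega))]
    congr 1
    refine Finset.sum_congr rfl fun j _ => ?_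
    rw [← pow_mul]
  · rw [map_mul, map_mul, map_pow, map_neg, map_one, map_natCast, hεB n le_rfl]

end Universal2

end AuxUniversal

/-- torsion-free criterion, Theorem 1.07: if `R` is a torsion-free
pre-λ-ring whose Adams operations satisfy `Ψⁿ(1)=1`, `Ψⁿ(ab)=Ψⁿ(a)Ψⁿ(b)` and
`Ψⁿ∘Ψᵐ = Ψ^{nm}`, then the pre-λ-structure is a λ-ring structure. -/
theorem torsionFree_preLambda_isLambda {R : Type} [CommRing R]
    (l Ψ : ℕ → R → R) (hl : IsPreLambda l)
    (htf : ∀ (n : ℕ) (r : R), 0 < n → n • r = 0 → r = 0)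
    (hrec : NewtonRec l Ψ)
    (hone : ∀ n : ℕ, 1 ≤ n → Ψ n (1 : R) = 1)
    (hmul : ∀ n : ℕ, 1 ≤ n → ∀ a b : R, Ψ n (a * b) = Ψ n a * Ψ n b)
    (hcomp : ∀ n m : ℕ, 1 ≤ n → 1 ≤ m → ∀ a : R, Ψ n (Ψ m a) = Ψ (n * m) a)
    (P : ∀ n : ℕ, MvPolynomial (Fin n ⊕ Fin n) ℤ) (hP : IsWittMulFamily P)
    (Q : ∀ n m : ℕ, MvPolynomial (Fin (n * m)) ℤ) (hQ : IsWittExtFamily Q) :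
    LambdaIdent l P Q := by
  obtain ⟨hl0, hl1, hladd⟩ := hl
  have hrec' : ∀ a : R, Rec (fun n => l n a) (fun n => Ψ n a) := fun a => hrec a
  have psi_nd : ∀ (a : R) (k : ℕ), 1 ≤ k → Ψ k a = nd (fun n => l n a) k :=
    fun a k hk => rec_nd_unique (hrec' a) (hl0 a) k hk
  constructor
  · -- product formula
    intro x y n
    have hψ : Rec (fun n => l n (x * y)) (fun k => Ψ k x * Ψ k y) :=
      rec_congr (hrec' (x * y)) (fun _ => rfl) (fun k hk => hmul k hk x y)
    have hD : Rec (fun n => MvPolynomial.eval₂ (Int.castRingHom R)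
        (Sum.elim (fun i : Fin n => l ((i : ℕ) + 1) x) fun j : Fin n => l ((j : ℕ) + 1) y)
          (P n))
        (fun k => Ψ k x * Ψ k y) := by
      intro K hK
      have ul := UL1 hP K hK
      set φ : MvPolynomial (Fin K ⊕ Fin K) ℤ →+* R :=
        MvPolynomial.eval₂Hom (Int.castRingHom R)
          (Sum.elim (fun i : Fin K => l ((i : ℕ) + 1) x)
            (fun j : Fin K => l ((j : ℕ) + 1) y)) with hφdef
      have hφX : ∀ v : Fin K ⊕ Fin K, φ (MvPolynomial.X v)
          = Sum.elim (fun i : Fin K => l ((i : ℕ) + 1) x)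
              (fun j : Fin K => l ((j : ℕ) + 1) y) v := by
        intro v
        rw [hφdef, MvPolynomial.eval₂Hom_X']
      have hφcs : ∀ jj, 1 ≤ jj → jj ≤ K →
          φ (seqV (fun j : Fin K => MvPolynomial.X (Sum.inl j)) jj) = l jj x := by
        intro jj h1 h2
        rw [seqV, dif_pos ⟨h1, by omega⟩, hφX]
        show l ((jj - 1) + 1) x = l jj x
        congr 1
        omega
      have hφcσ : ∀ jj, 1 ≤ jj → jj ≤ K →
          φ (seqV (fun j : Fin K => MvPolynomial.X (Sum.inr j)) jj) = l jj y := by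
        intro jj h1 h2
        rw [seqV, dif_pos ⟨h1, by omega⟩, hφX]
        show l ((jj - 1) + 1) y = l jj y
        congr 1
        omega
      have hφnds : ∀ t, 1 ≤ t → t ≤ K →
          φ (nd (seqV (fun j : Fin K => MvPolynomial.X (Sum.inl j))) t) = Ψ t x := by
        intro t h1 h2
        rw [nd_map φ, nd_congr (c' := fun n => l n x) t
          (fun i hi1 hi2 => hφcs i hi1 (le_trans hi2 h2)), ← psi_nd x t h1]
      have hφndσ : ∀ t, 1 ≤ t → t ≤ K →
          φ (nd (seqV (fun j : Fin K => MvPolynomial.X (Sum.inr j))) t) = Ψ t y := by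
        intro t h1 h2
        rw [nd_map φ, nd_congr (c' := fun n => l n y) t
          (fun i hi1 hi2 => hφcσ i hi1 (le_trans hi2 h2)), ← psi_nd y t h1]
      have hφD : ∀ nn : ℕ, nn ≤ K →
          φ (MvPolynomial.eval₂ (Int.castRingHom (MvPolynomial (Fin K ⊕ Fin K) ℤ))
            (Sum.elim
              (fun v : Fin nn => seqV (fun j : Fin K => MvPolynomial.X (Sum.inl j)) ((v : ℕ)+1))
              (fun v : Fin nn => seqV (fun j : Fin K => MvPolynomial.X (Sum.inr j)) ((v : ℕ)+1)))
            (P nn))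
          = MvPolynomial.eval₂ (Int.castRingHom R)
              (Sum.elim (fun i : Fin nn => l ((i : ℕ) + 1) x)
                fun j : Fin nn => l ((j : ℕ) + 1) y) (P nn) := by
        intro nn hnn
        have h := MvPolynomial.eval₂_comp_left φ
          (Int.castRingHom (MvPolynomial (Fin K ⊕ Fin K) ℤ))
          (Sum.elim
            (fun v : Fin nn => seqV (fun j : Fin K => MvPolynomial.X (Sum.inl j)) ((v : ℕ)+1))
            (fun v : Fin nn => seqV (fun j : Fin K => MvPolynomial.X (Sum.inr j)) ((v : ℕ)+1)))
          (P nn)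
        rw [Subsingleton.elim
            (φ.comp (Int.castRingHom (MvPolynomial (Fin K ⊕ Fin K) ℤ))) (Int.castRingHom R)] at h
        rw [show (⇑φ ∘ (Sum.elim
              (fun v : Fin nn => seqV (fun j : Fin K => MvPolynomial.X (Sum.inl j)) ((v : ℕ)+1))
              (fun v : Fin nn => seqV (fun j : Fin K => MvPolynomial.X (Sum.inr j)) ((v : ℕ)+1))))
            = Sum.elim (fun i : Fin nn => l ((i : ℕ) + 1) x)
                (fun j : Fin nn => l ((j : ℕ) + 1) y) from by
          funext v
          rcases v with v | v
          · simp only [Function.comp_apply, Sum.elim_inl]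
            exact hφcs ((v : ℕ) + 1) (by omega) (by have := v.2; omega)
          · simp only [Function.comp_apply, Sum.elim_inr]
            exact hφcσ ((v : ℕ) + 1) (by omega) (by have := v.2; omega)] at h
        exact h
      have hmain := congrArg φ ul
      simp only [map_sum, map_mul, map_pow, map_neg, map_one, map_natCast] at hmain
      rw [Finset.sum_congr rfl (fun i hi => by
        simp only [Finset.mem_range] at hi
        rw [hφD i (by omega), hφnds (K - i) (by omega) (by omega),
          hφndσ (K - i) (by omega) (by omega)]), hφD K le_rfl] at hmain
      exact hmain
    have h0 : MvPolynomial.eval₂ (Int.castRingHom R)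
        (Sum.elim (fun i : Fin 0 => l ((i : ℕ) + 1) x) fun j : Fin 0 => l ((j : ℕ) + 1) y)
        (P 0) = 1 := by
      have h := hP R 0 0 0 le_rfl le_rfl Fin.elim0 Fin.elim0
      rw [show (Sum.elim (fun i : Fin 0 => esymmF ((i : ℕ) + 1) (Fin.elim0 : Fin 0 → R))
            fun j : Fin 0 => esymmF ((j : ℕ) + 1) (Fin.elim0 : Fin 0 → R))
          = (Sum.elim (fun i : Fin 0 => l ((i : ℕ) + 1) x)
            fun j : Fin 0 => l ((j : ℕ) + 1) y) from by
        funext v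
        rcases v with v | v <;> exact v.elim0] at h
      rw [h]
      simp
    exact rec_unique htf (by rw [hl0, h0]) hψ hD n
  · -- composition formula
    intro x mm nn
    have psi_add : ∀ k, 1 ≤ k → ∀ a b : R, Ψ k (a + b) = Ψ k a + Ψ k b := by
      intro k hk a b
      have h1 : Rec (fun n => l n (a + b)) (fun j => Ψ j (a + b)) := hrec' _
      have h2 : Rec (fun n => l n (a + b)) (fun j => Ψ j a + Ψ j b) :=
        rec_congr (rec_conv (hrec' a) (hrec' b)) (fun n => (hladd a b n).symm) (fun _ _ => rfl)
      rw [rec_nd_unique h1 (hl0 _) k hk, rec_nd_unique h2 (hl0 _) k hk]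
    have psi_zero : ∀ k, 1 ≤ k → Ψ k 0 = 0 := by
      intro k hk
      have h := psi_add k hk 0 0
      rw [add_zero] at h
      have h' : Ψ k 0 + 0 = Ψ k 0 + Ψ k 0 := by rw [add_zero]; exact h
      exact (add_left_cancel h').symm
    have key : ∀ m', 1 ≤ m' → ∀ i : ℕ, Ψ m' (l i x)
        = nd (fun t => MvPolynomial.eval₂ (Int.castRingHom R)
            (fun v : Fin (t * i) => l ((v : ℕ) + 1) x) (Q t i)) m' := by
      intro m' hm'
      set F : R →+* R := ⟨⟨⟨Ψ m', hone m' hm'⟩, hmul m' hm'⟩, psi_zero m' hm',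
        psi_add m' hm'⟩ with hFdef
      have hFapp : ∀ r : R, F r = Ψ m' r := fun r => rfl
      have recA : Rec (fun i => Ψ m' (l i x)) (fun j => Ψ (m' * j) x) := by
        intro i hi
        have h := congrArg F (hrec x i hi)
        simp only [map_sum, map_mul, map_pow, map_neg, map_one, map_natCast] at h
        simp only [hFapp] at h
        rw [Finset.sum_congr rfl (fun t ht => by
          simp only [Finset.mem_range] at ht
          rw [show Ψ m' (Ψ (i - t) x) = Ψ (m' * (i - t)) x from
            hcomp m' (i - t) hm' (by omega) x])] at h
        exact h
      have recB : Rec (fun i => nd (fun t => MvPolynomial.eval₂ (Int.castRingHom R)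
          (fun v : Fin (t * i) => l ((v : ℕ) + 1) x) (Q t i)) m')
          (fun j => Ψ (m' * j) x) := by
        intro i hi
        have ul := UL2 hQ m' i hm' hi
        set φ : MvPolynomial (Fin (m' * i)) ℤ →+* R :=
          MvPolynomial.eval₂Hom (Int.castRingHom R)
            (fun v : Fin (m' * i) => l ((v : ℕ) + 1) x) with hφdef
        have hφcs : ∀ jj, 1 ≤ jj → jj ≤ m' * i →
            φ (seqV (fun j : Fin (m' * i) => MvPolynomial.X j) jj) = l jj x := by
          intro jj h1 h2
          rw [seqV, dif_pos ⟨h1, by omega⟩, hφdef, MvPolynomial.eval₂Hom_X']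
          show l ((jj - 1) + 1) x = l jj x
          congr 1
          omega
        have hφnd : ∀ t, 1 ≤ t → t ≤ m' * i →
            φ (nd (seqV (fun j : Fin (m' * i) => MvPolynomial.X j)) t) = Ψ t x := by
          intro t h1 h2
          rw [nd_map φ, nd_congr (c' := fun n => l n x) t
            (fun v hv1 hv2 => hφcs v hv1 (le_trans hv2 h2)), ← psi_nd x t h1]
        have hφB : ∀ t : ℕ, t ≤ i →
            φ (nd (fun t' => MvPolynomial.eval₂
                (Int.castRingHom (MvPolynomial (Fin (m' * i)) ℤ))
                (fun v : Fin (t' * t) =>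
                  seqV (fun j : Fin (m' * i) => MvPolynomial.X j) ((v : ℕ) + 1)) (Q t' t)) m')
            = nd (fun t' => MvPolynomial.eval₂ (Int.castRingHom R)
                (fun v : Fin (t' * t) => l ((v : ℕ) + 1) x) (Q t' t)) m' := by
          intro t ht
          rw [nd_map φ]
          refine nd_congr m' (fun t' h1 h2 => ?_)
          have h := MvPolynomial.eval₂_comp_left φ
            (Int.castRingHom (MvPolynomial (Fin (m' * i)) ℤ))
            (fun v : Fin (t' * t) =>
              seqV (fun j : Fin (m' * i) => MvPolynomial.X j) ((v : ℕ) + 1)) (Q t' t)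
          rw [Subsingleton.elim
              (φ.comp (Int.castRingHom (MvPolynomial (Fin (m' * i)) ℤ)))
              (Int.castRingHom R)] at h
          rw [show (⇑φ ∘ (fun v : Fin (t' * t) =>
                seqV (fun j : Fin (m' * i) => MvPolynomial.X j) ((v : ℕ) + 1)))
              = fun v : Fin (t' * t) => l ((v : ℕ) + 1) x from by
            funext v
            simp only [Function.comp_apply]
            refine hφcs ((v : ℕ) + 1) (by omega) ?_
            have hv := v.2
            have : t' * t ≤ m' * i := Nat.mul_le_mul h2 ht
            omega] at h
          exact h
        have hmain := congrArg φ ul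
        simp only [map_sum, map_mul, map_pow, map_neg, map_one, map_natCast] at hmain
        rw [Finset.sum_congr rfl (fun t ht => by
          simp only [Finset.mem_range] at ht
          rw [hφB t (by omega),
            hφnd (m' * (i - t)) (Nat.mul_pos (by omega) (by omega))
              (Nat.mul_le_mul le_rfl (by omega))]), hφB i le_rfl] at hmain
        exact hmain
      have hA0 : Ψ m' (l 0 x) = 1 := by rw [hl0]; exact hone m' hm'
      have hB0 : nd (fun t => MvPolynomial.eval₂ (Int.castRingHom R)
          (fun v : Fin (t * 0) => l ((v : ℕ) + 1) x) (Q t 0)) m' = 1 := by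
        have hv : ∀ t : ℕ, MvPolynomial.eval₂ (Int.castRingHom R)
            (fun v : Fin (t * 0) => l ((v : ℕ) + 1) x) (Q t 0)
            = ((1 : Polynomial R) + Polynomial.C (1 : R) * Polynomial.X).coeff t := by
          intro t
          have h := hQ R t 0 0 (by omega) Fin.elim0
          rw [show (fun v : Fin (t * 0) => esymmF ((v : ℕ) + 1) (Fin.elim0 : Fin 0 → R))
              = fun v : Fin (t * 0) => l ((v : ℕ) + 1) x from by
            funext v
            exact absurd v.2 (by omega)] at h
          rw [h]
          congr 1
          rw [Finset.univ_eq_empty, Finset.powersetCard_zero, Finset.prod_singleton,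
            Finset.prod_empty]
        rw [nd_congr m' (fun t h1 h2 => hv t)]
        have h := rec_nd_unique (rec_single (1 : R))
          (by simp [coeff_one_add_C_mul_X]) m' hm'
        rw [← h, one_pow]
      exact rec_unique htf (hA0.trans hB0.symm) recA recB
    have hv0 : MvPolynomial.eval₂ (Int.castRingHom R)
        (fun v : Fin (0 * nn) => l ((v : ℕ) + 1) x) (Q 0 nn) = 1 := by
      have h := hQ R 0 nn 0 (by omega) Fin.elim0
      rw [show (fun v : Fin (0 * nn) => esymmF ((v : ℕ) + 1) (Fin.elim0 : Fin 0 → R))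
          = fun v : Fin (0 * nn) => l ((v : ℕ) + 1) x from by
        funext v
        exact absurd v.2 (by omega)] at h
      rw [h]
      rcases Nat.eq_zero_or_pos nn with rfl | hnn
      · rw [Finset.univ_eq_empty, Finset.powersetCard_zero, Finset.prod_singleton,
          Finset.prod_empty]
        simp [coeff_one_add_C_mul_X]
      · rw [Finset.powersetCard_eq_empty.2 (by simp; omega), Finset.prod_empty]
        simp
    have recU : Rec (fun m' => l m' (l nn x)) (fun m' => Ψ m' (l nn x)) := hrec' _
    have recV : Rec (fun m' => MvPolynomial.eval₂ (Int.castRingHom R)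
        (fun v : Fin (m' * nn) => l ((v : ℕ) + 1) x) (Q m' nn))
        (fun m' => Ψ m' (l nn x)) := by
      refine rec_congr (nd_rec _ hv0) (fun _ => rfl) (fun m' hm' => ?_)
      exact (key m' hm' nn).symm
    exact rec_unique htf (by rw [hl0, hv0]) recU recV mm
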